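/- Define φ̂(t) = (t² + 1/4) / (cosh(2πt) Γ(−1/4 + it) Γ(−1/4 − it) Γ(6 + it) Γ(6 − it)). Then φ̂(t) > 0 for all real t, and the limit as t → ± i/4 along the imaginary axis equals 3 / (64 π^{3/2} Γ(23/4) Γ(25/4)). -/

import Mathlib

open Complex Filter

/-- The test function transform `φ̂`. -/
noncomputable def phiHat (t : ℂ) : ℂ :=
  (t ^ 2 + 1 / 4) /
    (Complex.cosh (2 * Real.pi * t) * Complex.Gamma (-1 / 4 + I * t) *
      Complex.Gamma (-1 / 4 - I * t) * Complex.Gamma (6 + I * t) * Complex.Gamma (6 - I * t))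

lemma phiHat_real_pos (t : ℝ) : ∃ r : ℝ, 0 < r ∧ phiHat (t : ℂ) = (r : ℂ) := by
  set Ga := Complex.Gamma (-1 / 4 + I * (t:ℂ)) with hGa
  set Gb := Complex.Gamma (6 + I * (t:ℂ)) with hGb
  have hGa0 : Ga ≠ 0 := by
    rw [hGa]
    apply Complex.Gamma_ne_zero
    intro m h
    have := congrArg Complex.re h
    simp [Complex.add_re, Complex.mul_re] at this
    norm_num at this
    rcases m with _ | m
    · simp at this
    · push_cast at this
      linarith [Nat.cast_nonneg (α := ℝ) m]
  have hGb0 : Gb ≠ 0 := by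
    rw [hGb]
    exact Complex.Gamma_ne_zero_of_re_pos (by simp [Complex.add_re, Complex.mul_re])
  have hca : Complex.Gamma (-1 / 4 - I * (t:ℂ)) = (starRingEnd ℂ) Ga := by
    rw [hGa, ← Complex.Gamma_conj]
    congr 1
    simp only [map_add, map_div₀, map_neg, map_one, map_ofNat, map_mul, Complex.conj_I,
      Complex.conj_ofReal]
    ring
  have hcb : Complex.Gamma (6 - I * (t:ℂ)) = (starRingEnd ℂ) Gb := by
    rw [hGb, ← Complex.Gamma_conj]
    congr 1
    simp only [map_add, map_sub, map_div₀, map_neg, map_one, map_ofNat, map_mul, Complex.conj_I,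
      Complex.conj_ofReal]
    ring
  have hcosh : Complex.cosh (2 * Real.pi * (t:ℂ)) = ((Real.cosh (2 * Real.pi * t) : ℝ) : ℂ) := by
    rw [Complex.ofReal_cosh]; push_cast; ring_nf
  refine ⟨(t^2 + 1/4) / (Real.cosh (2*Real.pi*t) * Complex.normSq Ga * Complex.normSq Gb), ?_, ?_⟩
  · have h1 : 0 < Real.cosh (2*Real.pi*t) := Real.cosh_pos _
    have h2 : 0 < Complex.normSq Ga := Complex.normSq_pos.mpr hGa0
    have h3 : 0 < Complex.normSq Gb := Complex.normSq_pos.mpr hGb0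
    have h4 : 0 < t^2 + 1/4 := by positivity
    positivity
  · rw [phiHat, hca, hcb, hcosh]
    rw [show ((Real.cosh (2*Real.pi*t) : ℝ) : ℂ) * Ga * (starRingEnd ℂ) Ga * Gb * (starRingEnd ℂ) Gb
        = ((Real.cosh (2*Real.pi*t) : ℝ) : ℂ) * (Ga * (starRingEnd ℂ) Ga) * (Gb * (starRingEnd ℂ) Gb) from by ring,
      Complex.mul_conj, Complex.mul_conj]
    push_cast
    ring

lemma cosh_mul_Gamma_key (t : ℂ) (hsin : Complex.sin (Real.pi * (-1 / 4 - I * t)) ≠ 0)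
    (hG : Complex.Gamma (5 / 4 + I * t) ≠ 0) :
    Complex.cosh (2 * Real.pi * t) * Complex.Gamma (-1 / 4 - I * t)
      = -(2 * Real.pi * Complex.cos (Real.pi * (-1 / 4 - I * t))) / Complex.Gamma (5 / 4 + I * t) := by
  have h := Complex.Gamma_mul_Gamma_one_sub (-1 / 4 - I * t)
  rw [show (1 - (-1 / 4 - I * t) : ℂ) = 5 / 4 + I * t from by ring] at h
  rw [eq_div_iff hsin] at h
  have h1 : Complex.cosh (2 * (Real.pi:ℂ) * t) = -Complex.sin (2 * ((Real.pi:ℂ) * (-1 / 4 - I * t))) := by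
    rw [show (2 * ((Real.pi:ℂ) * (-1 / 4 - I * t))) = -(2 * (Real.pi:ℂ) * t * I + Real.pi / 2) from by ring,
      Complex.sin_neg, Complex.sin_add_pi_div_two, Complex.cos_mul_I, neg_neg]
  rw [eq_div_iff hG, h1, Complex.sin_two_mul]
  linear_combination (-2 * Complex.cos ((Real.pi:ℂ) * (-1 / 4 - I * t))) * h

/-- the regularized function, continuous at `I/4`. -/
noncomputable def gFun (t : ℂ) : ℂ :=
  (t ^ 2 + 1 / 4) * Complex.Gamma (5 / 4 + I * t) /
    (-(2 * Real.pi * Complex.cos (Real.pi * (-1 / 4 - I * t))) * Complex.Gamma (-1 / 4 + I * t) *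
      Complex.Gamma (6 + I * t) * Complex.Gamma (6 - I * t))

lemma abs_small_ne {s : ℂ} (h : ‖s‖ < 1/2) {x : ℝ} (hx : 1 ≤ |x|) : s ≠ (x:ℂ) := by
  rintro rfl
  rw [Complex.norm_real, Real.norm_eq_abs] at h
  linarith

lemma phiHat_eq_gFun {t : ℂ} (hne : t ≠ I/4) (hd : ‖t - I/4‖ < 1/2) :
    phiHat t = gFun t := by
  have hts : t - I/4 = I * (-1/4 - I*t) := by linear_combination t * Complex.I_mul_I
  have habs : ‖(-1/4 - I*t : ℂ)‖ < 1/2 := by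
    have : ‖t - I/4‖ = ‖(-1/4 - I*t : ℂ)‖ := by
      rw [hts, norm_mul, Complex.norm_I, one_mul]
    linarith [this ▸ hd]
  have hs0 : (-1/4 - I*t : ℂ) ≠ 0 := by
    intro h
    apply hne
    have := hts
    rw [h, mul_zero, sub_eq_zero] at this
    exact this
  have hsin : Complex.sin (Real.pi * (-1 / 4 - I * t)) ≠ 0 := by
    intro h
    rw [Complex.sin_eq_zero_iff] at h
    obtain ⟨k, hk⟩ := h
    have hπ : ((Real.pi:ℂ)) ≠ 0 := Complex.ofReal_ne_zero.mpr Real.pi_ne_zero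
    have hk' : (-1/4 - I*t : ℂ) = (k:ℂ) := by
      rw [mul_comm ((k:ℂ)) ((Real.pi:ℂ))] at hk
      exact mul_left_cancel₀ hπ hk
    by_cases hk0 : k = 0
    · rw [hk0] at hk'; push_cast at hk'; exact hs0 hk'
    · have h1 : (1:ℝ) ≤ |(k:ℝ)| := by
        rw [← Int.cast_abs]
        exact_mod_cast Int.one_le_abs hk0
      exact abs_small_ne habs h1 (by rw [hk']; push_cast; ring)
  have hG54 : Complex.Gamma (5 / 4 + I * t) ≠ 0 := by
    apply Complex.Gamma_ne_zero
    intro m hm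
    have : (-1/4 - I*t : ℂ) = ((m:ℝ) + 1 : ℝ) := by push_cast; linear_combination -hm
    exact abs_small_ne habs
      (by rw [_root_.abs_of_nonneg (by positivity)]; linarith [Nat.cast_nonneg (α := ℝ) m]) this
  rw [phiHat, gFun]
  rw [show Complex.cosh (2 * Real.pi * t) * Complex.Gamma (-1 / 4 + I * t) *
      Complex.Gamma (-1 / 4 - I * t) * Complex.Gamma (6 + I * t) * Complex.Gamma (6 - I * t)
      = Complex.cosh (2 * Real.pi * t) * Complex.Gamma (-1 / 4 - I * t) *
        (Complex.Gamma (-1 / 4 + I * t) * Complex.Gamma (6 + I * t) * Complex.Gamma (6 - I * t)) from by ring,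
    cosh_mul_Gamma_key t hsin hG54, div_mul_eq_mul_div, div_div_eq_mul_div]
  ring

lemma forall_ne_neg_nat {x : ℂ} (hx : 0 < x.re) : ∀ m : ℕ, x ≠ -(m:ℂ) := by
  intro m h
  rw [h] at hx
  simp only [Complex.neg_re, Complex.natCast_re] at hx
  linarith [Nat.cast_nonneg (α := ℝ) m]

lemma neg_half_ne_neg_nat : ∀ m : ℕ, ((-1/2 : ℝ):ℂ) ≠ -(m:ℂ) := by
  intro m h
  have h2 : (-1/2 : ℝ) = -(m:ℝ) := by exact_mod_cast h
  rcases m with _ | m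
  · norm_num at h2
  · push_cast at h2
    linarith [Nat.cast_nonneg (α := ℝ) m]

lemma e1' : (5/4 + I*(I/4) : ℂ) = 1 := by linear_combination (1/4)*Complex.I_mul_I
lemma e2' : ((Real.pi:ℂ) * (-1/4 - I*(I/4))) = 0 := by
  linear_combination (-(Real.pi:ℂ)/4)*Complex.I_mul_I
lemma e3' : (-1/4 + I*(I/4) : ℂ) = ((-1/2 : ℝ):ℂ) := by
  push_cast; linear_combination (1/4)*Complex.I_mul_I
lemma e4' : (6 + I*(I/4) : ℂ) = ((23/4 : ℝ):ℂ) := by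
  push_cast; linear_combination (1/4)*Complex.I_mul_I
lemma e5' : (6 - I*(I/4) : ℂ) = ((25/4 : ℝ):ℂ) := by
  push_cast; linear_combination (-1/4)*Complex.I_mul_I

lemma Gamma_neg_half : Complex.Gamma ((-1/2 : ℝ):ℂ) = -(2 * (Real.sqrt Real.pi : ℂ)) := by
  rw [show ((-1/2 : ℝ):ℂ) = (-1/2 : ℂ) from by norm_num]
  have h := Complex.Gamma_add_one (-1/2 : ℂ) (by norm_num)
  rw [show (-1/2 : ℂ) + 1 = ((1/2 : ℝ):ℂ) from by push_cast; ring,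
    Complex.Gamma_ofReal, Real.Gamma_one_half_eq] at h
  linear_combination 2 * h

lemma hpow : Real.pi ^ ((3:ℝ)/2) = Real.pi * Real.sqrt Real.pi := by
  rw [show (3:ℝ)/2 = 1 + 1/2 from by norm_num, Real.rpow_add Real.pi_pos, Real.rpow_one,
    ← Real.sqrt_eq_rpow]

lemma gFun_value : gFun (I/4) =
    ((3 / (64 * Real.pi ^ ((3:ℝ)/2) * Real.Gamma (23/4) * Real.Gamma (25/4)) : ℝ) : ℂ) := by
  rw [gFun, e1', e2', e3', e4', e5', Complex.Gamma_one, Complex.cos_zero, Gamma_neg_half,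
    Complex.Gamma_ofReal, Complex.Gamma_ofReal]
  have e0 : ((I/4:ℂ))^2 + 1/4 = 3/16 := by linear_combination (1/16)*Complex.I_sq
  rw [e0]
  have h1 : (Real.pi : ℂ) ≠ 0 := Complex.ofReal_ne_zero.mpr Real.pi_ne_zero
  have h2 : ((Real.sqrt Real.pi : ℝ) : ℂ) ≠ 0 :=
    Complex.ofReal_ne_zero.mpr (ne_of_gt (Real.sqrt_pos.mpr Real.pi_pos))
  have h3 : ((Real.Gamma (23/4) : ℝ) : ℂ) ≠ 0 :=
    Complex.ofReal_ne_zero.mpr (ne_of_gt (Real.Gamma_pos_of_pos (by norm_num)))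
  have h4 : ((Real.Gamma (25/4) : ℝ) : ℂ) ≠ 0 :=
    Complex.ofReal_ne_zero.mpr (ne_of_gt (Real.Gamma_pos_of_pos (by norm_num)))
  push_cast [hpow]
  field_simp
  ring

lemma gFun_continuousAt : ContinuousAt gFun (I/4) := by
  have hc1 : ContinuousAt (fun t : ℂ => Complex.Gamma (5 / 4 + I * t)) (I/4) := by
    apply ContinuousAt.comp (g := Complex.Gamma)
    · rw [e1']
      exact (Complex.differentiableAt_Gamma 1 (forall_ne_neg_nat (by norm_num))).continuousAt
    · fun_prop
  have hc2 : ContinuousAt (fun t : ℂ => Complex.Gamma (-1 / 4 + I * t)) (I/4) := by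
    apply ContinuousAt.comp (g := Complex.Gamma)
    · rw [e3']
      exact (Complex.differentiableAt_Gamma _ neg_half_ne_neg_nat).continuousAt
    · fun_prop
  have hc3 : ContinuousAt (fun t : ℂ => Complex.Gamma (6 + I * t)) (I/4) := by
    apply ContinuousAt.comp (g := Complex.Gamma)
    · rw [e4']
      exact (Complex.differentiableAt_Gamma _ (forall_ne_neg_nat (by norm_num))).continuousAt
    · fun_prop
  have hc4 : ContinuousAt (fun t : ℂ => Complex.Gamma (6 - I * t)) (I/4) := by
    apply ContinuousAt.comp (g := Complex.Gamma)
    · rw [e5']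
      exact (Complex.differentiableAt_Gamma _ (forall_ne_neg_nat (by norm_num))).continuousAt
    · fun_prop
  have hden : (-(2 * (Real.pi:ℂ) * Complex.cos (Real.pi * (-1 / 4 - I * (I/4)))) *
      Complex.Gamma (-1 / 4 + I * (I/4)) * Complex.Gamma (6 + I * (I/4)) *
      Complex.Gamma (6 - I * (I/4))) ≠ 0 := by
    rw [e2', e3', e4', e5', Complex.cos_zero, Gamma_neg_half, Complex.Gamma_ofReal,
      Complex.Gamma_ofReal]
    have h1 : (Real.pi : ℂ) ≠ 0 := Complex.ofReal_ne_zero.mpr Real.pi_ne_zero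
    have h2 : ((Real.sqrt Real.pi : ℝ) : ℂ) ≠ 0 :=
      Complex.ofReal_ne_zero.mpr (ne_of_gt (Real.sqrt_pos.mpr Real.pi_pos))
    have h3 : ((Real.Gamma (23/4) : ℝ) : ℂ) ≠ 0 :=
      Complex.ofReal_ne_zero.mpr (ne_of_gt (Real.Gamma_pos_of_pos (by norm_num)))
    have h4 : ((Real.Gamma (25/4) : ℝ) : ℂ) ≠ 0 :=
      Complex.ofReal_ne_zero.mpr (ne_of_gt (Real.Gamma_pos_of_pos (by norm_num)))
    simp only [ne_eq, mul_eq_zero, neg_eq_zero, not_or]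
    norm_num [h1, h2, h3, h4]
  have hnum : ContinuousAt (fun t : ℂ => (t ^ 2 + 1 / 4) * Complex.Gamma (5 / 4 + I * t)) (I/4) :=
    ContinuousAt.mul (by fun_prop) hc1
  have hcos : ContinuousAt
      (fun t : ℂ => -(2 * (Real.pi:ℂ) * Complex.cos (Real.pi * (-1 / 4 - I * t)))) (I/4) := by
    apply ContinuousAt.neg
    apply ContinuousAt.mul continuousAt_const
    exact ContinuousAt.comp Complex.continuous_cos.continuousAt (by fun_prop)
  have hd : ContinuousAt (fun t : ℂ =>
      -(2 * (Real.pi:ℂ) * Complex.cos (Real.pi * (-1 / 4 - I * t))) *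
        Complex.Gamma (-1 / 4 + I * t) * Complex.Gamma (6 + I * t) *
        Complex.Gamma (6 - I * t)) (I/4) :=
    ((hcos.mul hc2).mul hc3).mul hc4
  exact ContinuousAt.div hnum hd hden

lemma phiHat_neg (z : ℂ) : phiHat (-z) = phiHat z := by
  rw [phiHat, phiHat,
    show (2 * (Real.pi:ℂ) * (-z)) = -(2 * Real.pi * z) from by ring, Complex.cosh_neg,
    show (-1 / 4 + I * (-z) : ℂ) = -1 / 4 - I * z from by ring,
    show (-1 / 4 - I * (-z) : ℂ) = -1 / 4 + I * z from by ring,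
    show ((6:ℂ) + I * (-z)) = 6 - I * z from by ring,
    show ((6:ℂ) - I * (-z)) = 6 + I * z from by ring]
  ring

lemma phiHat_tendsto_I4 :
    Tendsto phiHat (nhdsWithin (I / 4) {z | z ≠ I / 4})
      (nhds ((3 / (64 * Real.pi ^ ((3 : ℝ) / 2) * Real.Gamma (23 / 4) * Real.Gamma (25 / 4)) : ℝ) : ℂ)) := by
  have hg : Tendsto gFun (nhdsWithin (I / 4) {z | z ≠ I / 4})
      (nhds ((3 / (64 * Real.pi ^ ((3 : ℝ) / 2) * Real.Gamma (23 / 4) * Real.Gamma (25 / 4)) : ℝ) : ℂ)) := by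
    rw [← gFun_value]
    exact gFun_continuousAt.tendsto.mono_left nhdsWithin_le_nhds
  apply Tendsto.congr' _ hg
  have hball : ∀ᶠ t in nhdsWithin (I / 4) {z | z ≠ I / 4}, t ∈ Metric.ball (I/4 : ℂ) (1/2) :=
    nhdsWithin_le_nhds (Metric.ball_mem_nhds _ (by norm_num))
  filter_upwards [hball, self_mem_nhdsWithin] with t h1 h2
  rw [Metric.mem_ball, Complex.dist_eq] at h1
  exact (phiHat_eq_gFun h2 h1).symm

theorem phiHat_pos_and_limit :
    (∀ t : ℝ, ∃ r : ℝ, 0 < r ∧ phiHat (t : ℂ) = (r : ℂ)) ∧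
    Tendsto phiHat (nhdsWithin (I / 4) {z | z ≠ I / 4})
      (nhds ((3 / (64 * Real.pi ^ ((3 : ℝ) / 2) * Real.Gamma (23 / 4) * Real.Gamma (25 / 4)) : ℝ) : ℂ)) ∧
    Tendsto phiHat (nhdsWithin (-(I / 4)) {z | z ≠ -(I / 4)})
      (nhds ((3 / (64 * Real.pi ^ ((3 : ℝ) / 2) * Real.Gamma (23 / 4) * Real.Gamma (25 / 4)) : ℝ) : ℂ)) := by
  refine ⟨phiHat_real_pos, phiHat_tendsto_I4, ?_⟩
  have hback : Tendsto (fun z : ℂ => -z) (nhdsWithin (-(I / 4)) {z | z ≠ -(I / 4)})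
      (nhdsWithin (I / 4) {z | z ≠ I / 4}) := by
    apply tendsto_nhdsWithin_of_tendsto_nhds_of_eventually_within
    · have h : Tendsto (fun z : ℂ => -z) (nhds (-(I / 4))) (nhds (I / 4)) := by
        have h0 := (continuous_neg (G := ℂ)).tendsto (-(I / 4))
        rw [neg_neg] at h0
        exact h0
      exact h.mono_left nhdsWithin_le_nhds
    · filter_upwards [self_mem_nhdsWithin] with z hz
      show -z ≠ I / 4
      intro h
      exact hz (show z = -(I / 4) by simpa using congrArg Neg.neg h)
  have h := phiHat_tendsto_I4.comp hback
  exact h.congr fun z => phiHat_neg z
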